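/- Let n ≥ 1 and let v₁, …, v_m be nonzero vectors in ℚⁿ that span ℚⁿ. Then the group of all g ∈ GL(n,ℤ) such that multiplication by g permutes the set of lines {ℚv₁, …, ℚv_m} (i.e. for each i there is a j with v_i·g ∈ ℚv_j) is a finite group. -/

import Mathlib

open Matrix

private lemma den_mul_self (q : ℚ) : q * (q.den : ℚ) = (q.num : ℚ) := by
  have hd : (q.den : ℚ) ≠ 0 := by exact_mod_cast q.den_ne_zero
  have h := Rat.num_div_den q
  rw [div_eq_iff hd] at h
  exact h.symm

private lemma int_mul_of_den_dvd (q : ℚ) (d : ℤ) (h : (q.den : ℤ) ∣ d) :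
    ∃ a : ℤ, (d : ℚ) * q = a := by
  obtain ⟨e, rfl⟩ := h
  refine ⟨q.num * e, ?_⟩
  push_cast
  rw [← den_mul_self q]
  ring

private lemma mapQ_mul {k : ℕ} (A B : Matrix (Fin k) (Fin k) ℤ) :
    ((A * B).map (Int.cast : ℤ → ℚ)) = A.map Int.cast * B.map Int.cast := by
  ext i j
  simp [Matrix.mul_apply, Matrix.map_apply]

private lemma mapQ_one {k : ℕ} :
    ((1 : Matrix (Fin k) (Fin k) ℤ).map (Int.cast : ℤ → ℚ)) = 1 := by
  ext i j
  simp [Matrix.map_apply, Matrix.one_apply, apply_ite (Int.cast : ℤ → ℚ)]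

/-- if the nonzero vectors `v i` span `ℚⁿ`, then the group of all
`g ∈ GL(n,ℤ)` permuting the set of lines `{ℚ·v i}` (acting on row vectors on the right)
is finite. -/
theorem stmt16 (n m : ℕ) (v : Fin m → (Fin (n + 1) → ℚ)) (hv : ∀ i, v i ≠ 0)
    (hspan : Submodule.span ℚ (Set.range v) = ⊤) :
    {g : Matrix (Fin (n + 1)) (Fin (n + 1)) ℤ |
      (g.det = 1 ∨ g.det = -1) ∧
      ∀ i, ∃ j, ∃ lam : ℚ,
        Matrix.vecMul (v i) (g.map (Int.cast : ℤ → ℚ)) = lam • v j}.Finite := by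
  classical
  -- choose a nonzero coordinate of each `v i`
  have hvc : ∀ i, ∃ k, v i k ≠ 0 := fun i => Function.ne_iff.mp (hv i)
  choose c hc using hvc
  -- common denominator of all entries
  set D : ℤ := ∏ i : Fin m, ∏ k : Fin (n + 1), ((v i k).den : ℤ) with hDdef
  have hDpos : 0 < D := Finset.prod_pos fun i _ => Finset.prod_pos fun k _ => by
    exact_mod_cast (v i k).pos
  have hD0 : (D : ℚ) ≠ 0 := by exact_mod_cast hDpos.ne'
  have hdvd : ∀ i k, ((v i k).den : ℤ) ∣ D := by
    intro i k
    have h1 : ((v i k).den : ℤ) ∣ ∏ k : Fin (n + 1), ((v i k).den : ℤ) :=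
      Finset.dvd_prod_of_mem (fun k => ((v i k).den : ℤ)) (Finset.mem_univ k)
    have h2 : (∏ k : Fin (n + 1), ((v i k).den : ℤ)) ∣ D :=
      Finset.dvd_prod_of_mem (fun i => ∏ k : Fin (n + 1), ((v i k).den : ℤ))
        (Finset.mem_univ i)
    exact h1.trans h2
  have hDint : ∀ i k, ∃ a : ℤ, (D : ℚ) * v i k = a := fun i k =>
    int_mul_of_den_dvd _ _ (hdvd i k)
  -- `D • (v i ᵥ* Aℚ)` has integer entries for any integer matrix `A`
  have hvecint : ∀ (A : Matrix (Fin (n + 1)) (Fin (n + 1)) ℤ) (i : Fin m) (l : Fin (n + 1)),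
      ∃ a : ℤ, (D : ℚ) * (v i ᵥ* (A.map (Int.cast : ℤ → ℚ))) l = a := by
    intro A i l
    choose a ha using fun k => hDint i k
    refine ⟨∑ k, a k * A k l, ?_⟩
    simp only [vecMul, dotProduct, Matrix.map_apply]
    push_cast
    rw [Finset.mul_sum]
    refine Finset.sum_congr rfl fun k _ => ?_
    rw [← mul_assoc, ha k]
  -- the finite target sets
  set N : Fin m → Fin m → ℚ := fun i j => (D : ℚ) ^ 2 * v j (c j) * v i (c i) with hNdef
  have hN0 : ∀ i j, N i j ≠ 0 := fun i j => by
    simp only [hNdef]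
    exact mul_ne_zero (mul_ne_zero (pow_ne_zero 2 hD0) (hc j)) (hc i)
  set T : Fin m → Set (Fin (n + 1) → ℚ) := fun i =>
    ⋃ j : Fin m, (fun a : ℤ => ((a : ℚ) / ((D : ℚ) * v j (c j))) • v j) ''
      {a : ℤ | a ∣ (N i j).num} with hTdef
  have hTfin : ∀ i, (T i).Finite := by
    intro i
    refine Set.finite_iUnion fun j => Set.Finite.image _ ?_
    have hNnum : (N i j).num ≠ 0 := Rat.num_ne_zero.mpr (hN0 i j)
    refine (Set.finite_Icc (-(N i j).num.natAbs : ℤ) ((N i j).num.natAbs : ℤ)).subset ?_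
    intro a ha
    simp only [Set.mem_setOf_eq] at ha
    have h1 : a.natAbs ∣ (N i j).num.natAbs := Int.natAbs_dvd_natAbs.mpr ha
    have h2 : a.natAbs ≤ (N i j).num.natAbs :=
      Nat.le_of_dvd (Int.natAbs_pos.mpr hNnum) h1
    simp only [Set.mem_Icc]
    omega
  -- key step: for `g` in the set, `v i ᵥ* gℚ ∈ T i`
  have key : ∀ g : Matrix (Fin (n + 1)) (Fin (n + 1)) ℤ,
      (g.det = 1 ∨ g.det = -1) →
      (∀ i, ∃ j, ∃ lam : ℚ, v i ᵥ* (g.map (Int.cast : ℤ → ℚ)) = lam • v j) →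
      ∀ i, (v i ᵥ* (g.map (Int.cast : ℤ → ℚ))) ∈ T i := by
    intro g hgdet hgperm i
    obtain ⟨j, lam, hlam⟩ := hgperm i
    -- integer inverse of g
    set h : Matrix (Fin (n + 1)) (Fin (n + 1)) ℤ := g.det • g.adjugate with hhdef
    have hdet2 : g.det * g.det = 1 := by rcases hgdet with h1 | h1 <;> rw [h1] <;> ring
    have hgh : g * h = 1 := by
      rw [hhdef, Matrix.mul_smul, Matrix.mul_adjugate, smul_smul, hdet2, one_smul]
    have hghQ : (g.map (Int.cast : ℤ → ℚ)) * (h.map (Int.cast : ℤ → ℚ)) = 1 := by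
      rw [← mapQ_mul, hgh, mapQ_one]
    have hlam0 : lam ≠ 0 := by
      intro h0
      apply hv i
      calc v i = (v i ᵥ* (g.map (Int.cast : ℤ → ℚ))) ᵥ* (h.map (Int.cast : ℤ → ℚ)) := by
            rw [vecMul_vecMul, hghQ, vecMul_one]
        _ = 0 := by rw [hlam, h0, zero_smul, Matrix.zero_vecMul]
    have hinv : v j ᵥ* (h.map (Int.cast : ℤ → ℚ)) = lam⁻¹ • v i := by
      have h1 : (lam • v j) ᵥ* (h.map (Int.cast : ℤ → ℚ)) = v i := by
        rw [← hlam, vecMul_vecMul, hghQ, vecMul_one]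
      rw [Matrix.smul_vecMul] at h1
      rw [← h1, smul_smul, inv_mul_cancel₀ hlam0, one_smul]
    obtain ⟨a, ha⟩ := hvecint g i (c j)
    obtain ⟨b, hb⟩ := hvecint h j (c i)
    have ha' : (a : ℚ) = (D : ℚ) * (lam * v j (c j)) := by
      rw [← ha, hlam]; simp
    have hb' : (b : ℚ) = (D : ℚ) * (lam⁻¹ * v i (c i)) := by
      rw [← hb, hinv]; simp
    have hab : ((a * b : ℤ) : ℚ) = N i j := by
      push_cast
      rw [ha', hb', hNdef]
      field_simp
    have habN : a * b = (N i j).num := by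
      have h1 : ((a * b : ℤ) : ℚ).num = (N i j).num := congrArg Rat.num hab
      rwa [Rat.num_intCast] at h1
    have hadvd : a ∣ (N i j).num := ⟨b, habN.symm⟩
    have hvjc : (D : ℚ) * v j (c j) ≠ 0 := mul_ne_zero hD0 (hc j)
    have hlameq : lam = (a : ℚ) / ((D : ℚ) * v j (c j)) := by
      rw [ha']
      field_simp
      ring
      exact (mul_inv_cancel₀ (hc j)).symm
    refine Set.mem_iUnion.mpr ⟨j, ⟨a, hadvd, ?_⟩⟩
    rw [hlam, hlameq]
  -- the map `g ↦ (i ↦ v i ᵥ* gℚ)` is injective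
  have hinj : Function.Injective (fun g : Matrix (Fin (n + 1)) (Fin (n + 1)) ℤ =>
      fun i => v i ᵥ* (g.map (Int.cast : ℤ → ℚ))) := by
    intro g g' hgg'
    have h1 : (g.map (Int.cast : ℤ → ℚ)).vecMulLinear =
        (g'.map (Int.cast : ℤ → ℚ)).vecMulLinear := by
      apply LinearMap.ext_on hspan
      rintro x ⟨i, rfl⟩
      simpa using congrFun hgg' i
    have h2 : g.map (Int.cast : ℤ → ℚ) = g'.map (Int.cast : ℤ → ℚ) := by
      ext k l
      have h3 := congrFun (congrFun (congrArg DFunLike.coe h1) (Pi.single k 1)) l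
      simpa [Matrix.vecMulLinear_apply, Matrix.single_one_vecMul] using h3
    ext k l
    have h4 := congrFun (congrFun h2 k) l
    simpa [Matrix.map_apply] using h4
  -- assemble
  refine Set.Finite.of_finite_image ?_ hinj.injOn
  refine (Set.Finite.pi' hTfin).subset ?_
  rintro _ ⟨g, hg, rfl⟩
  exact fun i => key g hg.1 hg.2 i
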